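/- Let f be a measurable function on ℝⁿ and Q a cube of finite positive measure. If m_f(Q) is a median value of f on Q, i.e., both |{x ∈ Q : f(x) > m_f(Q)}| ≤ |Q|/2 and |{x ∈ Q : f(x) < m_f(Q)}| ≤ |Q|/2, then |m_f(Q)| ≤ (f·1_Q)^*(|Q|/2), where g^*(t) = inf{α > 0 : |{x : |g(x)| > α}| < t} is the decreasing rearrangement. -/

import Mathlib

open Set Filter MeasureTheory
open scoped ENNReal

noncomputable section

/-- The decreasing rearrangement `g^*(t) = inf {α > 0 : |{x : |g x| > α}| < t}`. -/
def rearrangement {n : ℕ} (g : (Fin n → ℝ) → ℝ) (t : ℝ≥0∞) : ℝ :=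
  sInf {α : ℝ | 0 < α ∧ volume {x | α < |g x|} < t}

/-- If `m` is a median value of a measurable function `f` on a set `Q` of finite
positive measure, then `|m| ≤ (f·1_Q)^*(|Q|/2)`. -/
theorem stmt_6 {n : ℕ} (f : (Fin n → ℝ) → ℝ) (hf : Measurable f)
    (Q : Set (Fin n → ℝ)) (hQ : MeasurableSet Q)
    (hQpos : 0 < volume Q) (hQfin : volume Q < ⊤) (m : ℝ)
    (h1 : volume {x ∈ Q | m < f x} ≤ volume Q / 2)
    (h2 : volume {x ∈ Q | f x < m} ≤ volume Q / 2) :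
    |m| ≤ rearrangement (Q.indicator f) (volume Q / 2) := by
  set g := Q.indicator f with hg
  have hind : Measurable g := hf.indicator hQ
  have hhalf : 0 < volume Q / 2 := ENNReal.div_pos hQpos.ne' (by norm_num)
  have hhalf_fin : volume Q / 2 ≠ ⊤ :=
    (ENNReal.div_lt_top hQfin.ne (by norm_num)).ne
  -- the set is nonempty
  have hne : {α : ℝ | 0 < α ∧ volume {x | α < |g x|} < volume Q / 2}.Nonempty := by
    set A : ℕ → Set (Fin n → ℝ) := fun k => {x | (k : ℝ) + 1 < |g x|} with hA
    have hAQ : ∀ k, A k ⊆ Q := by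
      intro k x hx
      by_contra hxQ
      have : g x = 0 := Set.indicator_of_notMem hxQ f
      have hx' : (k : ℝ) + 1 < |g x| := hx
      rw [this] at hx'
      simp at hx'
      linarith [Nat.cast_nonneg (α := ℝ) k]
    have hmeas : ∀ k, NullMeasurableSet (A k) volume := fun k =>
      (measurableSet_lt measurable_const hind.abs).nullMeasurableSet
    have hanti : Antitone A := by
      intro k l hkl x hx
      have hx' : (l : ℝ) + 1 < |g x| := hx
      have : (k : ℝ) ≤ l := Nat.cast_le.mpr hkl
      exact lt_of_le_of_lt (by linarith) hx'
    have hiInter : ⋂ k, A k = ∅ := by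
      ext x
      simp only [Set.mem_iInter, Set.mem_empty_iff_false, iff_false, not_forall]
      obtain ⟨k, hk⟩ := exists_nat_gt (|g x|)
      exact ⟨k, by simp only [A, Set.mem_setOf_eq]; push_neg; linarith⟩
    have hfin : ∃ k, volume (A k) ≠ ⊤ :=
      ⟨0, ((measure_mono (hAQ 0)).trans_lt hQfin).ne⟩
    have htend : Tendsto (fun k => volume (A k)) atTop (nhds 0) := by
      have := MeasureTheory.tendsto_measure_iInter_atTop hmeas hanti hfin
      rwa [hiInter, measure_empty] at this
    obtain ⟨k, hk⟩ := (htend.eventually_lt_const hhalf).exists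
    exact ⟨(k : ℝ) + 1, by positivity, hk⟩
  -- key counting lemma
  have key : ∀ p : (Fin n → ℝ) → Prop, volume {x ∈ Q | p x} ≤ volume Q / 2 →
      volume Q / 2 ≤ volume {x ∈ Q | ¬ p x} := by
    intro p hp
    have hsub : Q ⊆ {x ∈ Q | p x} ∪ {x ∈ Q | ¬ p x} := by
      intro x hx
      by_cases h : p x
      · exact Or.inl ⟨hx, h⟩
      · exact Or.inr ⟨hx, h⟩
    have h1' : volume Q ≤ volume {x ∈ Q | p x} + volume {x ∈ Q | ¬ p x} :=
      (measure_mono hsub).trans (measure_union_le _ _)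
    have h2' : volume Q / 2 + volume Q / 2 ≤ volume Q / 2 + volume {x ∈ Q | ¬ p x} := by
      calc volume Q / 2 + volume Q / 2 = volume Q := ENNReal.add_halves _
        _ ≤ volume {x ∈ Q | p x} + volume {x ∈ Q | ¬ p x} := h1'
        _ ≤ volume Q / 2 + volume {x ∈ Q | ¬ p x} := add_le_add_left hp _
    exact (ENNReal.add_le_add_iff_left hhalf_fin).mp h2'
  refine le_csInf hne ?_
  rintro α ⟨hα, hvol⟩
  by_contra hcon
  push_neg at hcon
  rcases abs_cases m with ⟨he, hm⟩ | ⟨he, hm⟩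
  · -- m ≥ 0, use the set where f x ≥ m
    have hsub : {x ∈ Q | ¬ f x < m} ⊆ {x | α < |g x|} := by
      rintro x ⟨hxQ, hxf⟩
      push_neg at hxf
      have hgx : g x = f x := Set.indicator_of_mem hxQ f
      have : α < f x := by rw [he] at hcon; linarith
      simp only [Set.mem_setOf_eq, hgx]
      exact this.trans_le (le_abs_self _)
    have := (key _ h2).trans (measure_mono hsub)
    exact absurd hvol (not_lt.mpr this)
  · -- m < 0, use the set where f x ≤ m
    have hsub : {x ∈ Q | ¬ m < f x} ⊆ {x | α < |g x|} := by
      rintro x ⟨hxQ, hxf⟩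
      push_neg at hxf
      have hgx : g x = f x := Set.indicator_of_mem hxQ f
      have : α < -f x := by rw [he] at hcon; linarith
      simp only [Set.mem_setOf_eq, hgx]
      exact this.trans_le (neg_le_abs _)
    have := (key _ h1).trans (measure_mono hsub)
    exact absurd hvol (not_lt.mpr this)
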